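/- Let R be a commutative ring with unity, l ∈ ℕ, and I = Q_1·Q_2⋯Q_l where each Q_i ⊆ R is an ideal whose radical rad(Q_i) = M_i is a maximal ideal and M_i ≠ M_j for i ≠ j. Define the relation ∼^R_I on GCD_{k+1}(R) by (a_0,…,a_k) ∼^R_I (b_0,…,b_k) iff a_i b_j − b_i a_j ∈ I for all 0 ≤ i,j ≤ k. Then the two relations ∼^R_I and ∼^{k,(1,1,…,1)}_I on GCD_{k+1}(R) are identical. -/

import Mathlib

/-- Product of pairwise comaximal ideals equals their infimum. -/
lemma prod_eq_inf_aux {R : Type*} [CommRing R] {ι : Type*} (s : Finset ι)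
    (Q : ι → Ideal R) (h : ∀ i ∈ s, ∀ j ∈ s, i ≠ j → Q i ⊔ Q j = ⊤) :
    ∏ i ∈ s, Q i = s.inf Q := by
  induction s using Finset.cons_induction with
  | empty => simp [Ideal.one_eq_top]
  | cons a s ha ih =>
    rw [Finset.prod_cons, Finset.inf_cons,
      ← ih (fun i hi j hj => h i (Finset.mem_cons_of_mem hi) j (Finset.mem_cons_of_mem hj))]
    exact Ideal.mul_eq_inf_of_coprime (Ideal.sup_prod_eq_top fun i hi =>
      h a (Finset.mem_cons_self a s) i (Finset.mem_cons_of_mem hi) (fun e => ha (e ▸ hi)))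

/-- If `Q` has radical the maximal ideal `M` and `x ∉ M`, then `x` is a unit mod `Q`. -/
lemma isUnit_mk_of_not_mem_aux {R : Type*} [CommRing R] {Q M : Ideal R}
    (hrad : Q.radical = M) (hmax : M.IsMaximal) {x : R} (hx : x ∉ M) :
    IsUnit (Ideal.Quotient.mk Q x) := by
  have h1 : Q ⊔ Ideal.span {x} = ⊤ := by
    rw [← Ideal.radical_eq_top]
    by_contra hne
    have hM : M ≤ (Q ⊔ Ideal.span {x}).radical := hrad ▸ Ideal.radical_mono le_sup_left
    have hxmem : x ∈ (Q ⊔ Ideal.span {x}).radical :=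
      Ideal.le_radical (Ideal.mem_sup_right (Ideal.mem_span_singleton_self x))
    exact hx ((hmax.eq_of_le hne hM) ▸ hxmem)
  obtain ⟨q, hq, r, hr, hqr⟩ := Submodule.mem_sup.mp (h1 ▸ Submodule.mem_top (x := (1 : R)))
  obtain ⟨c, rfl⟩ := Ideal.mem_span_singleton'.mp hr
  refine IsUnit.of_mul_eq_one (Ideal.Quotient.mk Q c) ?_
  have : x * c - 1 = -q := by rw [← hqr]; ring
  rw [← map_mul, ← sub_eq_zero, ← map_one (Ideal.Quotient.mk Q), ← map_sub,
    Ideal.Quotient.eq_zero_iff_mem, this]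
  exact neg_mem hq

/-- Let `R` be a commutative ring with unity and `I = Q_1 ⋯ Q_l` where each
`Q_i` is an ideal whose radical `M_i` is a maximal ideal, the `M_i` being pairwise distinct.
Then on unital `(k+1)`-vectors the relation `(a_i) ∼^R_I (b_i)` given by
`a_i b_j - b_i a_j ∈ I` for all `i, j` coincides with the relation `∼^{k,(1,…,1)}_I`. -/
theorem projRel_eq_crossRel {R : Type*} [CommRing R] (k l : ℕ)
    (Q : Fin l → Ideal R) (M : Fin l → Ideal R)
    (hmax : ∀ i, (M i).IsMaximal)
    (hrad : ∀ i, (Q i).radical = M i)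
    (hdist : ∀ i j, i ≠ j → M i ≠ M j)
    (a b : Fin (k + 1) → R)
    (ha : ∑ i, Ideal.span {a i} = ⊤) (hb : ∑ i, Ideal.span {b i} = ⊤) :
    (∀ i j, a i * b j - b i * a j ∈ ∏ i, Q i) ↔
      ∃ lam : R, IsUnit (Ideal.Quotient.mk (∏ i, Q i) lam) ∧
        ∀ i, a i - lam * b i ∈ ∏ i, Q i := by
  classical
  have hcop : ∀ i j : Fin l, i ≠ j → Q i ⊔ Q j = ⊤ := by
    intro i j hij
    rw [← Ideal.radical_eq_top, Ideal.radical_sup, hrad, hrad,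
      (hmax i).coprime_of_ne (hmax j) (hdist i j hij),
      Ideal.radical_top]
  have hpair : Pairwise (Function.onFun IsCoprime Q) := fun i j hij =>
    Ideal.isCoprime_iff_sup_eq.mpr (hcop i j hij)
  have hprodinf : (∏ i, Q i) = ⨅ i, Q i := by
    rw [← Finset.inf_univ_eq_iInf]
    exact prod_eq_inf_aux _ _ (fun i _ j _ hij => hcop i j hij)
  have hQle : ∀ t : Fin l, (∏ i, Q i) ≤ Q t := fun t =>
    Ideal.prod_le_inf.trans (Finset.inf_le (Finset.mem_univ t))
  -- existence of indices avoiding each maximal ideal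
  have hexists : ∀ (c : Fin (k + 1) → R), (∑ i, Ideal.span {c i} = ⊤) →
      ∀ t : Fin l, ∃ i, c i ∉ M t := by
    intro c hc t
    by_contra hcon
    push_neg at hcon
    have hle : ∑ i, Ideal.span {c i} ≤ M t := by
      refine Finset.sum_induction _ (· ≤ M t) (fun x y hx hy => ?_) bot_le
        (fun i _ => Ideal.span_le.mpr (Set.singleton_subset_iff.mpr (hcon i)))
      rw [Submodule.add_eq_sup]; exact sup_le hx hy
    exact (hmax t).ne_top (top_le_iff.mp (hc ▸ hle))
  constructor
  · intro hcross
    have key : ∀ t : Fin l, ∃ u : R ⧸ Q t, IsUnit u ∧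
        ∀ i, Ideal.Quotient.mk (Q t) (a i) = u * Ideal.Quotient.mk (Q t) (b i) := by
      intro t
      obtain ⟨i0, hi0⟩ := hexists a ha t
      obtain ⟨j0, hj0⟩ := hexists b hb t
      have hcrosst : ∀ i j, Ideal.Quotient.mk (Q t) (a i) * Ideal.Quotient.mk (Q t) (b j)
          = Ideal.Quotient.mk (Q t) (b i) * Ideal.Quotient.mk (Q t) (a j) := by
        intro i j
        rw [← map_mul, ← map_mul]
        exact Ideal.Quotient.eq.mpr (hQle t (hcross i j))
      have hua : IsUnit (Ideal.Quotient.mk (Q t) (a i0)) :=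
        isUnit_mk_of_not_mem_aux (hrad t) (hmax t) hi0
      have hub : IsUnit (Ideal.Quotient.mk (Q t) (b j0)) :=
        isUnit_mk_of_not_mem_aux (hrad t) (hmax t) hj0
      have hbi0 : IsUnit (Ideal.Quotient.mk (Q t) (b i0)) := by
        have := hcrosst i0 j0
        exact isUnit_of_mul_isUnit_left (this ▸ hua.mul hub)
      obtain ⟨v, hv⟩ := hbi0.exists_right_inv
      refine ⟨Ideal.Quotient.mk (Q t) (a i0) * v, hua.mul (IsUnit.of_mul_eq_one (a := v) _
        (by rw [mul_comm]; exact hv)), fun i => ?_⟩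
      have hc := hcrosst i i0
      calc Ideal.Quotient.mk (Q t) (a i)
          = Ideal.Quotient.mk (Q t) (a i) * (Ideal.Quotient.mk (Q t) (b i0) * v) := by
            rw [hv, mul_one]
        _ = Ideal.Quotient.mk (Q t) (a i) * Ideal.Quotient.mk (Q t) (b i0) * v := by ring
        _ = Ideal.Quotient.mk (Q t) (b i) * Ideal.Quotient.mk (Q t) (a i0) * v := by rw [hc]
        _ = Ideal.Quotient.mk (Q t) (a i0) * v * Ideal.Quotient.mk (Q t) (b i) := by ring
    choose u hu1 hu2 using key
    obtain ⟨lam, hlam⟩ := Ideal.pi_quotient_surjective hpair u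
    obtain ⟨mu, hmu⟩ := Ideal.pi_quotient_surjective hpair
      (fun t => (((hu1 t).unit⁻¹ : (R ⧸ Q t)ˣ) : R ⧸ Q t))
    have hmem : ∀ (x : R), (∀ t, Ideal.Quotient.mk (Q t) x = 0) → x ∈ ∏ i, Q i := by
      intro x hx
      rw [hprodinf, Submodule.mem_iInf]
      exact fun t => Ideal.Quotient.eq_zero_iff_mem.mp (hx t)
    refine ⟨lam, ?_, fun i => ?_⟩
    · refine IsUnit.of_mul_eq_one (Ideal.Quotient.mk _ mu) ?_
      rw [← map_mul, ← sub_eq_zero, ← map_one (Ideal.Quotient.mk (∏ i, Q i)), ← map_sub,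
        Ideal.Quotient.eq_zero_iff_mem]
      refine hmem _ (fun t => ?_)
      rw [map_sub, map_mul, map_one, hlam t, hmu t, (hu1 t).mul_val_inv, sub_self]
    · refine hmem _ (fun t => ?_)
      rw [map_sub, map_mul, hlam t, hu2 t i, sub_self]
  · rintro ⟨lam, -, h⟩ i j
    have heq : a i * b j - b i * a j = (a i - lam * b i) * b j - (a j - lam * b j) * b i := by
      ring
    rw [heq]
    exact sub_mem (Ideal.mul_mem_right _ _ (h i)) (Ideal.mul_mem_right _ _ (h j))
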